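/- Let n ≥ 1. Set a_k = k/(n+1) for 0 ≤ k ≤ n+1, let g_n(x) = Σ_{k=0}^{n} C(n,k) (−1)^k · 1_{(a_k, a_{k+1})}(x), and define G_n(x) = (1/(n−1)!) ∫_0^x (x−s)^{n−1} g_n(s) ds for x ∈ [0,1] (so G_n is the n-fold iterated integral of g_n from 0). Then: (i) G_n is (n−1)-times continuously differentiable on [0,1]; (ii) G_n(x)/x^n → 1/n! as x → 0⁺; (iii) G_n(1−x) = G_n(x) for all x ∈ [0,1], so that G_n(x) = O((1−x)^n) as x → 1⁻; and (iv) G_n(x) > 0 for every x ∈ (0,1). -/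

import Mathlib

open MeasureTheory Filter Topology Asymptotics

noncomputable def tp (j : ℕ) (t : ℝ) : ℝ := max t 0 ^ j

lemma tp_of_nonneg {t : ℝ} (h : 0 ≤ t) (j : ℕ) : tp j t = t ^ j := by
  simp [tp, max_eq_left h]

lemma tp_of_nonpos {t : ℝ} (h : t ≤ 0) {j : ℕ} (hj : 1 ≤ j) : tp j t = 0 := by
  rw [tp, max_eq_right h]
  exact zero_pow (by omega)

lemma tp_nonneg (j : ℕ) (t : ℝ) : 0 ≤ tp j t := pow_nonneg (le_max_right _ _) _

lemma tp_continuous (j : ℕ) : Continuous (tp j) :=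
  (continuous_id.max continuous_const).pow j

lemma tp_neg {j : ℕ} (hj : 1 ≤ j) (u : ℝ) :
    tp j (-u) = (-1) ^ j * (u ^ j - tp j u) := by
  rcases le_total u 0 with h | h
  · rw [tp_of_nonneg (by linarith) j, tp_of_nonpos h hj]
    ring
  · rw [tp_of_nonpos (by linarith) hj, tp_of_nonneg h j]
    ring

lemma tp_mul (j : ℕ) {c : ℝ} (t : ℝ) (hc : 0 ≤ c) : tp j (c * t) = c ^ j * tp j t := by
  have : max (c * t) 0 = c * max t 0 := by
    rw [mul_max_of_nonneg _ _ hc, mul_zero]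
  rw [tp, tp, this, mul_pow]

lemma tp_hasDerivAt {j : ℕ} (hj : 2 ≤ j) (t : ℝ) :
    HasDerivAt (tp j) (j * tp (j - 1) t) t := by
  rcases lt_trichotomy t 0 with h | h | h
  · have he : tp j =ᶠ[𝓝 t] fun _ => (0 : ℝ) := by
      filter_upwards [Iio_mem_nhds h] with s hs
      exact tp_of_nonpos (le_of_lt hs) (by omega)
    rw [tp_of_nonpos h.le (by omega), mul_zero]
    exact (hasDerivAt_const t (0 : ℝ)).congr_of_eventuallyEq he
  · subst h
    rw [tp_of_nonpos le_rfl (by omega), mul_zero]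
    rw [hasDerivAt_iff_tendsto_slope]
    have h0 : tp j 0 = 0 := tp_of_nonpos le_rfl (by omega)
    have hb : ∀ s : ℝ, s ∈ Set.Ioo (-1 : ℝ) 1 \ {0} → ‖slope (tp j) 0 s‖ ≤ ‖s‖ := by
      rintro s ⟨hs, hs0⟩
      have hs0' : s ≠ 0 := hs0
      rw [slope_def_field, h0]; simp only [sub_zero]
      rcases le_total s 0 with h | h
      · rw [tp_of_nonpos h (by omega)]
        simp [div_eq_mul_inv]
      · rw [tp_of_nonneg h]
        have h1 : |s| ≤ 1 := abs_le.2 ⟨hs.1.le, hs.2.le⟩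
        rw [Real.norm_eq_abs, Real.norm_eq_abs, abs_div, abs_pow]
        rw [div_le_iff₀ (abs_pos.2 hs0')]
        calc |s| ^ j ≤ |s| ^ 2 := pow_le_pow_of_le_one (abs_nonneg s) h1 hj
          _ = |s| * |s| := by ring
    have hlim : Tendsto (fun s : ℝ => ‖s‖) (𝓝[≠] (0:ℝ)) (𝓝 0) := by
      have := (continuous_norm.tendsto (0:ℝ)).mono_left (nhdsWithin_le_nhds (s := {(0:ℝ)}ᶜ))
      simpa using this
    refine squeeze_zero_norm' ?_ hlim
    filter_upwards [inter_mem_nhdsWithin _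
      (Ioo_mem_nhds (by norm_num : (-1:ℝ) < 0) (by norm_num : (0:ℝ) < 1))] with s hs
    exact hb s ⟨hs.2, hs.1⟩
  · have he : tp j =ᶠ[𝓝 t] fun s => s ^ j := by
      filter_upwards [Ioi_mem_nhds h] with s hs
      exact tp_of_nonneg (le_of_lt hs) j
    rw [tp_of_nonneg h.le]
    exact (hasDerivAt_pow j t).congr_of_eventuallyEq he

lemma tp_contDiff : ∀ j : ℕ, ContDiff ℝ (j : ℕ∞) (tp (j + 1))
  | 0 => by
    rw [show ((0:ℕ) : ℕ∞) = 0 by norm_cast]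
    exact contDiff_zero.2 (tp_continuous 1)
  | (j + 1) => by
    have hd : deriv (tp (j + 2)) = fun t => ((j:ℝ) + 2) * tp (j + 1) t := by
      funext t
      have := (tp_hasDerivAt (j := j + 2) (by omega) t).deriv
      rw [this]; push_cast; norm_num
    have hcast : (((j + 1 : ℕ) : ℕ∞) : WithTop ℕ∞) = ((j : ℕ∞) : WithTop ℕ∞) + 1 := by
      norm_cast
    rw [hcast]
    rw [contDiff_succ_iff_deriv]
    refine ⟨fun t => (tp_hasDerivAt (by omega) t).differentiableAt, by simp, ?_⟩
    rw [hd]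
    exact contDiff_const.mul (tp_contDiff j)

lemma pascal_sum (m : ℕ) (f : ℕ → ℝ) :
    ∑ k ∈ Finset.range (m + 1), (-1 : ℝ) ^ k * (m.choose k : ℝ) * (f k - f (k + 1)) =
    ∑ k ∈ Finset.range (m + 2), (-1 : ℝ) ^ k * ((m + 1).choose k : ℝ) * f k := by
  have hR : ∑ k ∈ Finset.range (m + 2), (-1 : ℝ) ^ k * ((m + 1).choose k : ℝ) * f k
      = ∑ k ∈ Finset.range (m + 1), (-1 : ℝ) ^ (k+1) * (((m.choose k : ℝ)) + (m.choose (k+1) : ℝ)) * f (k + 1)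
        + f 0 := by
    rw [Finset.sum_range_succ' (fun k => (-1 : ℝ) ^ k * ((m + 1).choose k : ℝ) * f k) (m+1)]
    simp only [Nat.choose_succ_succ, Nat.cast_add, pow_zero, Nat.choose_zero_right,
      Nat.cast_one, one_mul]
  have hL0 : ∑ k ∈ Finset.range (m + 1), (-1 : ℝ) ^ k * (m.choose k : ℝ) * f k
      = ∑ k ∈ Finset.range m, (-1 : ℝ) ^ (k+1) * (m.choose (k+1) : ℝ) * f (k+1) + f 0 := by
    rw [Finset.sum_range_succ' (fun k => (-1 : ℝ) ^ k * (m.choose k : ℝ) * f k) m]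
    simp
  have hext : ∑ k ∈ Finset.range m, (-1 : ℝ) ^ (k+1) * (m.choose (k+1) : ℝ) * f (k+1)
      = ∑ k ∈ Finset.range (m+1), (-1 : ℝ) ^ (k+1) * (m.choose (k+1) : ℝ) * f (k+1) := by
    rw [Finset.sum_range_succ]
    simp [Nat.choose_succ_self]
  have hsplit : ∑ k ∈ Finset.range (m + 1), (-1 : ℝ) ^ k * (m.choose k : ℝ) * (f k - f (k + 1))
      = (∑ k ∈ Finset.range (m + 1), (-1 : ℝ) ^ k * (m.choose k : ℝ) * f k)
        - ∑ k ∈ Finset.range (m + 1), (-1 : ℝ) ^ k * (m.choose k : ℝ) * f (k + 1) := by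
    rw [← Finset.sum_sub_distrib]
    exact Finset.sum_congr rfl fun k _ => by ring
  have hRD : ∑ k ∈ Finset.range (m + 1), (-1 : ℝ) ^ (k+1) * (((m.choose k : ℝ)) + (m.choose (k+1) : ℝ)) * f (k + 1)
      = (∑ k ∈ Finset.range (m + 1), (-1 : ℝ) ^ (k+1) * (m.choose (k+1) : ℝ) * f (k+1))
        - ∑ k ∈ Finset.range (m + 1), (-1 : ℝ) ^ k * (m.choose k : ℝ) * f (k+1) := by
    rw [← Finset.sum_sub_distrib]
    exact Finset.sum_congr rfl fun k _ => by ring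
  rw [hsplit, hL0, hext, hR, hRD]
  ring

open Polynomial in
lemma altsum_poly : ∀ (m : ℕ) (p : Polynomial ℝ), p.degree < (m : ℕ) →
    ∑ k ∈ Finset.range (m + 1), (-1 : ℝ) ^ k * (m.choose k : ℝ) * p.eval (k : ℝ) = 0
  | 0 => by
    intro p hp
    have hp0 : p = 0 := by
      rw [← Polynomial.degree_eq_bot]
      simpa using (by simpa using hp : p.degree < 0)
    simp [hp0]
  | (m + 1) => by
    intro p hp
    set q : Polynomial ℝ := p - p.comp (X + 1) with hq
    have hqd : q.degree < (m : ℕ) := by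
      rcases eq_or_ne p 0 with rfl | hp0
      · simp only [hq, Polynomial.zero_comp, sub_zero, Polynomial.degree_zero]
        exact bot_lt_iff_ne_bot.2 (by simp)
      · rcases eq_or_ne q 0 with hq0 | hq0
        · rw [hq0, Polynomial.degree_zero]
          exact bot_lt_iff_ne_bot.2 (by simp)
        · have hcomp0 : p.comp (X + 1) ≠ 0 := by
            rw [show (X + 1 : Polynomial ℝ) = X + C 1 by simp]
            exact Polynomial.comp_X_add_C_ne_zero_iff.2 hp0
          have hndeg : (p.comp (X + 1)).natDegree = p.natDegree := by
            rw [Polynomial.natDegree_comp]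
            rw [show (X + 1 : Polynomial ℝ) = X + C 1 by simp, Polynomial.natDegree_X_add_C]
            ring
          have hdeq : p.degree = (p.comp (X + 1)).degree := by
            rw [Polynomial.degree_eq_natDegree hp0, Polynomial.degree_eq_natDegree hcomp0, hndeg]
          have hlead : p.leadingCoeff = (p.comp (X + 1)).leadingCoeff := by
            rw [Polynomial.leadingCoeff_comp (by
              rw [show (X + 1 : Polynomial ℝ) = X + C 1 by simp, Polynomial.natDegree_X_add_C]
              exact one_ne_zero)]
            have h1 : (X + 1 : Polynomial ℝ).leadingCoeff = 1 := by
              rw [show (X + 1 : Polynomial ℝ) = X + C 1 by simp]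
              exact Polynomial.leadingCoeff_X_add_C 1
            rw [h1, one_pow, mul_one]
          have h1 : q.degree < p.degree := Polynomial.degree_sub_lt hdeq hp0 hlead
          have h2 : p.natDegree ≤ m := by
            have := (Polynomial.degree_eq_natDegree hp0) ▸ hp
            rw [Nat.cast_withBot, Nat.cast_withBot] at this
            exact_mod_cast Nat.lt_succ_iff.1 (WithBot.coe_lt_coe.1 this)
          calc q.degree < p.degree := h1
            _ = (p.natDegree : WithBot ℕ) := Polynomial.degree_eq_natDegree hp0
            _ ≤ (m : WithBot ℕ) := by
                rw [Nat.cast_withBot, Nat.cast_withBot]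
                exact_mod_cast h2
    have key := pascal_sum m (fun k => p.eval (k : ℝ))
    have hev : ∀ k : ℕ, p.eval (k : ℝ) - p.eval ((k + 1 : ℕ) : ℝ) = q.eval (k : ℝ) := by
      intro k
      simp only [hq, Polynomial.eval_sub, Polynomial.eval_comp, Polynomial.eval_add,
        Polynomial.eval_X, Polynomial.eval_one]
      push_cast
      ring_nf
    have : ∑ k ∈ Finset.range (m + 2), (-1 : ℝ) ^ k * ((m + 1).choose k : ℝ) * p.eval (k : ℝ)
        = ∑ k ∈ Finset.range (m + 1), (-1 : ℝ) ^ k * (m.choose k : ℝ) * q.eval (k : ℝ) := by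
      rw [← key]
      exact Finset.sum_congr rfl fun k _ => by rw [← hev k]
    rw [this]
    exact altsum_poly m q hqd

open Polynomial in
lemma altsum_pow (m : ℕ) (hm : 1 ≤ m) (t : ℝ) :
    ∑ k ∈ Finset.range (m + 1), (-1 : ℝ) ^ k * (m.choose k : ℝ) * (t - (k : ℝ)) ^ (m - 1) = 0 := by
  have hdeg : ((C t - X : Polynomial ℝ) ^ (m - 1)).degree < (m : ℕ) := by
    have h1 : (C t - X : Polynomial ℝ).degree = 1 := by
      rw [show (C t - X : Polynomial ℝ) = -(X - C t) by ring, Polynomial.degree_neg,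
        Polynomial.degree_X_sub_C]
    rw [Polynomial.degree_pow, h1]
    rw [Nat.cast_withBot]
    calc ((m-1) • (1 : WithBot ℕ)) = ((m - 1 : ℕ) : WithBot ℕ) := by
          simp [Nat.cast_withBot]
      _ < (m : WithBot ℕ) := by exact_mod_cast Nat.sub_lt (by omega) one_pos
  have := altsum_poly m ((C t - X) ^ (m - 1)) hdeg
  simpa using this

noncomputable def Sfun (m : ℕ) (t : ℝ) : ℝ :=
  ∑ k ∈ Finset.range (m + 1), (-1 : ℝ) ^ k * (m.choose k : ℝ) * tp (m - 1) (t - (k : ℝ))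

lemma Sfun_continuous (m : ℕ) : Continuous (Sfun m) := by
  apply continuous_finset_sum
  intro k _
  exact continuous_const.mul ((tp_continuous _).comp (continuous_id.sub continuous_const))

lemma Sfun_of_nonpos {m : ℕ} (hm : 2 ≤ m) {t : ℝ} (ht : t ≤ 0) : Sfun m t = 0 := by
  apply Finset.sum_eq_zero
  intro k _
  rw [tp_of_nonpos (sub_nonpos.2 (ht.trans (Nat.cast_nonneg k))) (by omega : 1 ≤ m - 1),
    mul_zero]

lemma neg_one_pow_sub {a b : ℕ} (h : b ≤ a) : (-1 : ℝ) ^ (a - b) = (-1) ^ a * (-1) ^ b := by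
  have h1 : (-1 : ℝ) ^ (a - b) * (-1) ^ b = (-1) ^ a := by
    rw [← pow_add, Nat.sub_add_cancel h]
  have h2 : (-1 : ℝ) ^ b * (-1) ^ b = 1 := by
    rw [← pow_add]
    exact Even.neg_one_pow ⟨b, rfl⟩
  calc (-1 : ℝ) ^ (a - b) = (-1) ^ (a - b) * ((-1) ^ b * (-1) ^ b) := by rw [h2, mul_one]
    _ = ((-1) ^ (a - b) * (-1) ^ b) * (-1) ^ b := by ring
    _ = (-1) ^ a * (-1) ^ b := by rw [h1]

lemma Sfun_symm {m : ℕ} (hm : 2 ≤ m) (t : ℝ) : Sfun m ((m : ℝ) - t) = Sfun m t := by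
  have halt := altsum_pow m (by omega) t
  unfold Sfun
  rw [← Finset.sum_range_reflect
    (fun k => (-1 : ℝ) ^ k * (m.choose k : ℝ) * tp (m - 1) ((m : ℝ) - t - (k : ℝ))) (m + 1)]
  have hterm : ∀ k ∈ Finset.range (m + 1),
      (-1 : ℝ) ^ (m + 1 - 1 - k) * (m.choose (m + 1 - 1 - k) : ℝ) *
          tp (m - 1) ((m : ℝ) - t - ((m + 1 - 1 - k : ℕ) : ℝ))
        = -((-1 : ℝ) ^ k * (m.choose k : ℝ) * (t - (k : ℝ)) ^ (m - 1))
          + (-1 : ℝ) ^ k * (m.choose k : ℝ) * tp (m - 1) (t - (k : ℝ)) := by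
    intro k hk
    have hk' : k ≤ m := Nat.lt_succ_iff.1 (Finset.mem_range.1 hk)
    have hmk : m + 1 - 1 - k = m - k := by omega
    rw [hmk, Nat.choose_symm hk', Nat.cast_sub hk']
    have harg : (m : ℝ) - t - ((m : ℝ) - (k : ℝ)) = -(t - (k : ℝ)) := by ring
    rw [harg, tp_neg (by omega : 1 ≤ m - 1) (t - (k : ℝ)), neg_one_pow_sub hk',
      neg_one_pow_sub (by omega : 1 ≤ m)]
    have hsq : (-1 : ℝ) ^ m * (-1) ^ m = 1 := by
      rw [← pow_add]; exact Even.neg_one_pow ⟨m, rfl⟩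
    linear_combination (-((-1 : ℝ) ^ k * (m.choose k : ℝ) *
      ((t - (k : ℝ)) ^ (m - 1) - tp (m - 1) (t - (k : ℝ))))) * hsq
  rw [Finset.sum_congr rfl hterm, Finset.sum_add_distrib, Finset.sum_neg_distrib, halt]
  simp

lemma Sfun_of_ge {m : ℕ} (hm : 2 ≤ m) {t : ℝ} (ht : (m : ℝ) ≤ t) : Sfun m t = 0 := by
  rw [← Sfun_symm hm t]
  exact Sfun_of_nonpos hm (by linarith)

lemma Sfun_int {m : ℕ} (hm : 2 ≤ m) (t : ℝ) :
    Sfun (m + 1) t = (m : ℝ) * ∫ s in (t - 1)..t, Sfun m s := by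
  have hm0 : (m : ℝ) ≠ 0 := Nat.cast_ne_zero.2 (by omega)
  have hFT : ∀ k : ℕ, (∫ s in (t - 1)..t, tp (m - 1) (s - (k : ℝ)))
      = tp m (t - (k : ℝ)) / m - tp m (t - 1 - (k : ℝ)) / m := by
    intro k
    have h1 : ∀ s : ℝ, HasDerivAt (fun u => tp m (u - (k : ℝ)) / m) (tp (m - 1) (s - (k : ℝ))) s := by
      intro s
      have h2 : HasDerivAt (fun u : ℝ => u - (k : ℝ)) 1 s := (hasDerivAt_id s).sub_const _
      have h3 := (tp_hasDerivAt hm (s - (k : ℝ))).comp s h2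
      have h4 := h3.div_const (m : ℝ)
      have : (m : ℝ) * tp (m - 1) (s - (k : ℝ)) * 1 / m = tp (m - 1) (s - (k : ℝ)) := by
        field_simp
      rw [this] at h4
      exact h4
    have := intervalIntegral.integral_eq_sub_of_hasDerivAt (a := t - 1) (b := t)
      (f := fun u => tp m (u - (k : ℝ)) / m) (fun s _ => h1 s)
      (((tp_continuous (m - 1)).comp (continuous_id.sub continuous_const)).intervalIntegrable _ _)
    rw [this]
  have hint : ∀ k : ℕ, IntervalIntegrable
      (fun s => (-1 : ℝ) ^ k * (m.choose k : ℝ) * tp (m - 1) (s - (k : ℝ))) volume (t - 1) t :=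
    fun k => Continuous.intervalIntegrable
      (continuous_const.mul ((tp_continuous _).comp (continuous_id.sub continuous_const))) _ _
  unfold Sfun
  rw [intervalIntegral.integral_finset_sum (fun k _ => hint k)]
  have hpt : ∀ k : ℕ, (∫ s in (t - 1)..t, (-1 : ℝ) ^ k * (m.choose k : ℝ) * tp (m - 1) (s - (k : ℝ)))
      = (-1 : ℝ) ^ k * (m.choose k : ℝ) * (tp m (t - (k : ℝ)) / m - tp m (t - 1 - (k : ℝ)) / m) := by
    intro k
    rw [intervalIntegral.integral_const_mul, hFT k]
  rw [Finset.sum_congr rfl (fun k _ => hpt k), Finset.mul_sum]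
  rw [show m + 1 - 1 = m from rfl]
  rw [← pascal_sum m (fun k => tp m (t - (k : ℝ)))]
  apply Finset.sum_congr rfl
  intro k _
  have harg : t - 1 - (k : ℝ) = t - ((k + 1 : ℕ) : ℝ) := by push_cast; ring
  rw [harg]
  field_simp

lemma Sfun_two_pos : ∀ t ∈ Set.Ioo (0 : ℝ) 2, 0 < Sfun 2 t := by
  intro t ht
  have hS : Sfun 2 t = tp 1 t - 2 * tp 1 (t - 1) + tp 1 (t - 2) := by
    unfold Sfun
    rw [Finset.sum_range_succ, Finset.sum_range_succ, Finset.sum_range_succ,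
      Finset.sum_range_zero]
    norm_num
    ring
  rw [hS]
  rcases le_total t 1 with h | h
  · rw [tp_of_nonneg ht.1.le, tp_of_nonpos (by linarith : t - 1 ≤ 0) le_rfl,
      tp_of_nonpos (by linarith : t - 2 ≤ 0) le_rfl, pow_one]
    linarith [ht.1]
  · rw [tp_of_nonneg ht.1.le, tp_of_nonneg (by linarith : (0:ℝ) ≤ t - 1),
      tp_of_nonpos (by linarith [ht.2] : t - 2 ≤ 0) le_rfl, pow_one, pow_one]
    linarith [ht.2]

lemma Sfun_pos : ∀ m : ℕ, 2 ≤ m → ∀ t : ℝ, t ∈ Set.Ioo (0 : ℝ) (m : ℝ) → 0 < Sfun m t := by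
  intro m hm
  induction m, hm using Nat.le_induction with
  | base =>
    intro t ht
    exact Sfun_two_pos t (by exact_mod_cast ht)
  | succ m hm ih =>
    intro t ht
    have htm : t < (m : ℝ) + 1 := by
      have := ht.2; push_cast at this; linarith
    have ht0 : 0 < t := ht.1
    have hmR : (2 : ℝ) ≤ (m : ℝ) := by exact_mod_cast hm
    have hnonneg : ∀ s : ℝ, 0 ≤ Sfun m s := by
      intro s
      rcases lt_trichotomy s 0 with h | h | h
      · rw [Sfun_of_nonpos hm h.le]
      · rw [h, Sfun_of_nonpos hm le_rfl]
      · rcases lt_trichotomy s (m : ℝ) with h2 | h2 | h2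
        · exact (ih s ⟨h, h2⟩).le
        · rw [h2, Sfun_of_ge hm le_rfl]
        · rw [Sfun_of_ge hm h2.le]
    set c := max (t - 1) 0 with hc
    set d := min t (m : ℝ) with hd
    have h1 : t - 1 ≤ c := le_max_left _ _
    have h3 : d ≤ t := min_le_left _ _
    have hcd : c < d := by
      rw [hc, hd, lt_min_iff]
      constructor
      · exact max_lt (by linarith) ht0
      · exact max_lt (by linarith) (by linarith)
    have hintg : ∀ u v : ℝ, IntervalIntegrable (Sfun m) volume u v :=
      fun u v => (Sfun_continuous m).intervalIntegrable u v
    have h2 : c ≤ d := hcd.le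
    have hsplit : (∫ s in (t - 1)..t, Sfun m s)
        = (∫ s in (t - 1)..c, Sfun m s) + ((∫ s in c..d, Sfun m s) + ∫ s in d..t, Sfun m s) := by
      rw [intervalIntegral.integral_add_adjacent_intervals (hintg c d) (hintg d t),
        intervalIntegral.integral_add_adjacent_intervals (hintg (t - 1) c) (hintg c t)]
    have hpos : 0 < ∫ s in c..d, Sfun m s := by
      apply intervalIntegral.intervalIntegral_pos_of_pos_on (hintg c d) _ hcd
      intro s hs
      refine ih s ⟨lt_of_le_of_lt (le_max_right _ _ : (0:ℝ) ≤ c) hs.1,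
        lt_of_lt_of_le hs.2 (min_le_right _ _)⟩
    have hnn1 : 0 ≤ ∫ s in (t - 1)..c, Sfun m s :=
      intervalIntegral.integral_nonneg h1 (fun s _ => hnonneg s)
    have hnn2 : 0 ≤ ∫ s in d..t, Sfun m s :=
      intervalIntegral.integral_nonneg h3 (fun u _ => hnonneg u)
    rw [Sfun_int hm t, hsplit]
    have hm0 : (0 : ℝ) < (m : ℝ) := by linarith
    have : (0 : ℝ) < (∫ s in (t - 1)..c, Sfun m s)
        + ((∫ s in c..d, Sfun m s) + ∫ s in d..t, Sfun m s) := by linarith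
    exact mul_pos hm0 this

lemma Sfun_nonneg {m : ℕ} (hm : 2 ≤ m) (s : ℝ) : 0 ≤ Sfun m s := by
  rcases lt_trichotomy s 0 with h | h | h
  · rw [Sfun_of_nonpos hm h.le]
  · rw [h, Sfun_of_nonpos hm le_rfl]
  · rcases lt_trichotomy s (m : ℝ) with h2 | h2 | h2
    · exact (Sfun_pos m hm s ⟨h, h2⟩).le
    · rw [h2, Sfun_of_ge hm le_rfl]
    · rw [Sfun_of_ge hm h2.le]

lemma ind_intble {j : ℕ} {a b x : ℝ} (u v : ℝ) :
    IntervalIntegrable (Set.indicator (Set.Ioo a b) (fun s => (x - s) ^ j)) volume u v := by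
  rw [intervalIntegrable_iff]
  have hc : IntegrableOn (fun s : ℝ => (x - s) ^ j) (Set.uIoc u v) volume := by
    apply Continuous.integrableOn_uIoc
    exact (continuous_const.sub continuous_id).pow j
  exact (hc.indicator measurableSet_Ioo).mono_set (by simp)

lemma int_ind {j : ℕ} (hj : 1 ≤ j) {a b x : ℝ} (h0a : 0 ≤ a) (hab : a ≤ b) (hx : 0 ≤ x) :
    (∫ s in (0:ℝ)..x, Set.indicator (Set.Ioo a b) (fun s => (x - s) ^ (j - 1)) s)
      = (tp j (x - a) - tp j (x - b)) / j := by
  have hj0 : (j : ℝ) ≠ 0 := Nat.cast_ne_zero.2 (by omega)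
  rcases le_or_gt x a with hxa | hax
  · have hz : ∀ s ∈ Set.uIcc (0:ℝ) x, Set.indicator (Set.Ioo a b) (fun s => (x - s) ^ (j - 1)) s = 0 := by
      intro s hs
      rw [Set.uIcc_of_le hx] at hs
      apply Set.indicator_of_notMem
      intro hmem
      exact absurd hmem.1 (not_lt.2 (hs.2.trans hxa))
    rw [intervalIntegral.integral_congr hz, intervalIntegral.integral_zero]
    rw [tp_of_nonpos (by linarith) hj, tp_of_nonpos (by linarith) hj]
    simp
  · set d := min x b with hdd
    have had : a ≤ d := le_min hax.le hab
    have hdx : d ≤ x := min_le_left _ _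
    -- split the integral
    have hsplit : (∫ s in (0:ℝ)..x, Set.indicator (Set.Ioo a b) (fun s => (x - s) ^ (j - 1)) s)
        = (∫ s in (0:ℝ)..a, Set.indicator (Set.Ioo a b) (fun s => (x - s) ^ (j - 1)) s)
          + ((∫ s in a..d, Set.indicator (Set.Ioo a b) (fun s => (x - s) ^ (j - 1)) s)
            + ∫ s in d..x, Set.indicator (Set.Ioo a b) (fun s => (x - s) ^ (j - 1)) s) := by
      rw [intervalIntegral.integral_add_adjacent_intervals (ind_intble a d) (ind_intble d x),
        intervalIntegral.integral_add_adjacent_intervals (ind_intble 0 a) (ind_intble a x)]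
    have hp1 : (∫ s in (0:ℝ)..a, Set.indicator (Set.Ioo a b) (fun s => (x - s) ^ (j - 1)) s) = 0 := by
      have hz : ∀ s ∈ Set.uIcc (0:ℝ) a, Set.indicator (Set.Ioo a b) (fun s => (x - s) ^ (j - 1)) s = 0 := by
        intro s hs
        rw [Set.uIcc_of_le h0a] at hs
        exact Set.indicator_of_notMem (fun hmem => absurd hmem.1 (not_lt.2 hs.2)) _
      rw [intervalIntegral.integral_congr hz, intervalIntegral.integral_zero]
    have hp3 : (∫ s in d..x, Set.indicator (Set.Ioo a b) (fun s => (x - s) ^ (j - 1)) s) = 0 := by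
      rcases le_total b x with hbx | hxb
      · have hdb : d = b := min_eq_right hbx
        have hz : ∀ s ∈ Set.uIcc d x, Set.indicator (Set.Ioo a b) (fun s => (x - s) ^ (j - 1)) s = 0 := by
          intro s hs
          rw [Set.uIcc_of_le (hdb ▸ hbx)] at hs
          exact Set.indicator_of_notMem (fun hmem => absurd hmem.2 (not_lt.2 (hdb ▸ hs.1))) _
        rw [intervalIntegral.integral_congr hz, intervalIntegral.integral_zero]
      · have hdb : d = x := min_eq_left hxb
        rw [hdb, intervalIntegral.integral_same]
    have hp2 : (∫ s in a..d, Set.indicator (Set.Ioo a b) (fun s => (x - s) ^ (j - 1)) s)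
        = ((x - a) ^ j - (x - d) ^ j) / j := by
      have hae : ∀ᵐ s ∂(volume : Measure ℝ), s ≠ b := by
        rw [MeasureTheory.ae_iff]
        have : {s : ℝ | ¬ s ≠ b} = {b} := by ext s; simp
        rw [this]
        exact Real.volume_singleton
      have hcongr : (∫ s in a..d, Set.indicator (Set.Ioo a b) (fun s => (x - s) ^ (j - 1)) s)
          = ∫ s in a..d, (x - s) ^ (j - 1) := by
        apply intervalIntegral.integral_congr_ae
        filter_upwards [hae] with s hsb hs
        rw [Set.uIoc_of_le had] at hs
        apply Set.indicator_of_mem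
        exact ⟨hs.1, lt_of_le_of_ne (hs.2.trans (min_le_right x b)) hsb⟩
      rw [hcongr]
      have : (∫ s in a..d, (x - s) ^ (j - 1)) = ∫ u in (x - d)..(x - a), u ^ (j - 1) :=
        intervalIntegral.integral_comp_sub_left (fun u => u ^ (j - 1)) x
      rw [this, integral_pow]
      rw [show j - 1 + 1 = j from by omega, Nat.cast_sub hj]
      push_cast
      ring
    rw [hsplit, hp1, hp2, hp3]
    have hta : tp j (x - a) = (x - a) ^ j := tp_of_nonneg (by linarith) j
    have htb : tp j (x - b) = (x - d) ^ j := by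
      rcases le_total b x with hbx | hxb
      · have hdb : d = b := by rw [hdd]; exact min_eq_right hbx
        rw [hdb, tp_of_nonneg (by linarith) j]
      · have hdb : d = x := by rw [hdd]; exact min_eq_left hxb
        rw [hdb, tp_of_nonpos (by linarith) hj, sub_self, zero_pow (by omega)]
    rw [hta, htb]
    ring

/-- `g_n = Σ_{k=0}^n C(n,k) (−1)^k 1_{(k/(n+1),(k+1)/(n+1))}`. -/
noncomputable def gfun (n : ℕ) (x : ℝ) : ℝ :=
  ∑ k ∈ Finset.range (n + 1), (n.choose k : ℝ) * (-1) ^ k *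
    Set.indicator (Set.Ioo ((k : ℝ) / (n + 1)) (((k : ℝ) + 1) / (n + 1)))
      (fun _ => (1 : ℝ)) x

/-- `G_n(x) = (1/(n−1)!) ∫_0^x (x−s)^{n−1} g_n(s) ds`, the `n`-fold iterated
integral of `g_n` from `0`. -/
noncomputable def Gfun (n : ℕ) (x : ℝ) : ℝ :=
  ((n - 1).factorial : ℝ)⁻¹ * ∫ s in (0 : ℝ)..x, (x - s) ^ (n - 1) * gfun n s

lemma Gint {n : ℕ} (hn : 1 ≤ n) {x : ℝ} (hx : 0 ≤ x) :
    (∫ s in (0:ℝ)..x, (x - s) ^ (n - 1) * gfun n s)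
      = ∑ k ∈ Finset.range (n + 1), ((n.choose k : ℝ) * (-1) ^ k) *
          ((tp n (x - (k : ℝ) / ((n : ℝ) + 1)) - tp n (x - ((k : ℝ) + 1) / ((n : ℝ) + 1))) / n) := by
  have hig : ∀ s : ℝ, (x - s) ^ (n - 1) * gfun n s
      = ∑ k ∈ Finset.range (n + 1), ((n.choose k : ℝ) * (-1) ^ k) *
          Set.indicator (Set.Ioo ((k : ℝ) / ((n : ℝ) + 1)) (((k : ℝ) + 1) / ((n : ℝ) + 1)))
            (fun s => (x - s) ^ (n - 1)) s := by
    intro s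
    unfold gfun
    rw [Finset.mul_sum]
    apply Finset.sum_congr rfl
    intro k _
    by_cases hs : s ∈ Set.Ioo ((k : ℝ) / ((n : ℝ) + 1)) (((k : ℝ) + 1) / ((n : ℝ) + 1))
    · rw [Set.indicator_of_mem hs, Set.indicator_of_mem hs]
      ring
    · rw [Set.indicator_of_notMem hs, Set.indicator_of_notMem hs]
      ring
  simp only [hig]
  rw [intervalIntegral.integral_finset_sum (fun k _ => (ind_intble _ _).const_mul _)]
  apply Finset.sum_congr rfl
  intro k _
  rw [intervalIntegral.integral_const_mul]
  congr 1
  have hden : (0:ℝ) < (n : ℝ) + 1 := by positivity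
  have h0a : (0:ℝ) ≤ (k : ℝ) / ((n : ℝ) + 1) := by positivity
  have hab : (k : ℝ) / ((n : ℝ) + 1) ≤ ((k : ℝ) + 1) / ((n : ℝ) + 1) := by
    have hk1 : (k : ℝ) ≤ (k : ℝ) + 1 := by linarith
    exact div_le_div_of_nonneg_right hk1 hden.le
  exact int_ind hn h0a hab hx

lemma Gfun_closed {n : ℕ} (hn : 1 ≤ n) {x : ℝ} (hx : 0 ≤ x) :
    Gfun n x = (n.factorial : ℝ)⁻¹ * (((n : ℝ) + 1)⁻¹) ^ n * Sfun (n + 1) (((n : ℝ) + 1) * x) := by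
  rw [Gfun, Gint hn hx]
  have hden : (0:ℝ) < (n : ℝ) + 1 := by positivity
  have hfk : ∀ k : ℕ, tp n (x - (k : ℝ) / ((n : ℝ) + 1))
      = (((n : ℝ) + 1)⁻¹) ^ n * tp n (((n : ℝ) + 1) * x - (k : ℝ)) := by
    intro k
    rw [← tp_mul n _ (by positivity : (0:ℝ) ≤ ((n : ℝ) + 1)⁻¹)]
    congr 1
    field_simp
  have hfact : (n.factorial : ℝ) = (n : ℝ) * ((n - 1).factorial : ℝ) := by
    obtain ⟨p, rfl⟩ : ∃ p, n = p + 1 := ⟨n - 1, by omega⟩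
    rw [Nat.add_sub_cancel]
    exact_mod_cast congrArg (Nat.cast (R := ℝ)) (Nat.factorial_succ p)
  have hn0 : (n : ℝ) ≠ 0 := Nat.cast_ne_zero.2 (by omega)
  have hf0 : ((n - 1).factorial : ℝ) ≠ 0 := Nat.cast_ne_zero.2 (Nat.factorial_ne_zero _)
  -- rewrite each summand as pascal difference
  have hstep : ∑ k ∈ Finset.range (n + 1), ((n.choose k : ℝ) * (-1) ^ k) *
          ((tp n (x - (k : ℝ) / ((n : ℝ) + 1)) - tp n (x - ((k : ℝ) + 1) / ((n : ℝ) + 1))) / n)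
      = (n : ℝ)⁻¹ * ∑ k ∈ Finset.range (n + 1), (-1 : ℝ) ^ k * (n.choose k : ℝ) *
          ((fun k : ℕ => tp n (x - (k : ℝ) / ((n : ℝ) + 1))) k
            - (fun k : ℕ => tp n (x - (k : ℝ) / ((n : ℝ) + 1))) (k + 1)) := by
    rw [Finset.mul_sum]
    apply Finset.sum_congr rfl
    intro k _
    have : ((k + 1 : ℕ) : ℝ) = (k : ℝ) + 1 := by push_cast; ring
    simp only [this]
    rw [div_eq_mul_inv]
    ring
  rw [hstep, pascal_sum n (fun k : ℕ => tp n (x - (k : ℝ) / ((n : ℝ) + 1)))]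
  have hsum : ∑ k ∈ Finset.range (n + 2), (-1 : ℝ) ^ k * ((n + 1).choose k : ℝ) *
        tp n (x - (k : ℝ) / ((n : ℝ) + 1))
      = (((n : ℝ) + 1)⁻¹) ^ n * Sfun (n + 1) (((n : ℝ) + 1) * x) := by
    unfold Sfun
    rw [Nat.add_sub_cancel, Finset.mul_sum]
    apply Finset.sum_congr rfl
    intro k _
    rw [hfk k]
    ring
  rw [hsum, hfact]
  rw [mul_inv]
  ring

lemma Gsmall {n : ℕ} (hn : 1 ≤ n) {x : ℝ} (hx : 0 ≤ x) (hx2 : x ≤ 1 / ((n : ℝ) + 1)) :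
    Gfun n x = x ^ n * (n.factorial : ℝ)⁻¹ := by
  have hden : (0:ℝ) < (n : ℝ) + 1 := by positivity
  rw [Gfun_closed hn hx]
  have ht1 : ((n : ℝ) + 1) * x ≤ 1 := by
    calc ((n : ℝ) + 1) * x ≤ ((n : ℝ) + 1) * (1 / ((n : ℝ) + 1)) :=
          mul_le_mul_of_nonneg_left hx2 hden.le
      _ = 1 := by field_simp
  have hS : Sfun (n + 1) (((n : ℝ) + 1) * x) = (((n : ℝ) + 1) * x) ^ n := by
    unfold Sfun
    rw [Nat.add_sub_cancel, Finset.sum_eq_single 0]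
    · simp only [Nat.cast_zero, sub_zero, pow_zero, Nat.choose_zero_right, Nat.cast_one,
        one_mul]
      rw [tp_of_nonneg (by positivity : (0:ℝ) ≤ ((n : ℝ) + 1) * x)]
    · intro k _ hk0
      have hk1 : (1 : ℝ) ≤ (k : ℝ) := by
        exact_mod_cast Nat.one_le_iff_ne_zero.2 hk0
      rw [tp_of_nonpos (by linarith) hn, mul_zero]
    · intro h
      exact absurd (Finset.mem_range.2 (by omega)) h
  rw [hS, mul_assoc, ← mul_pow, inv_mul_cancel_left₀ (ne_of_gt hden), mul_comm]

lemma Gsymm {n : ℕ} (hn : 1 ≤ n) : ∀ x ∈ Set.Icc (0:ℝ) 1, Gfun n (1 - x) = Gfun n x := by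
  intro x hx
  rw [Gfun_closed hn hx.1, Gfun_closed hn (by linarith [hx.2] : (0:ℝ) ≤ 1 - x)]
  congr 1
  have harg : ((n : ℝ) + 1) * (1 - x) = (((n + 1 : ℕ)) : ℝ) - ((n : ℝ) + 1) * x := by
    push_cast; ring
  rw [harg, Sfun_symm (by omega : 2 ≤ n + 1)]

lemma Gpos {n : ℕ} (hn : 1 ≤ n) : ∀ x ∈ Set.Ioo (0:ℝ) 1, 0 < Gfun n x := by
  intro x hx
  have hden : (0:ℝ) < (n : ℝ) + 1 := by positivity
  rw [Gfun_closed hn hx.1.le]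
  apply mul_pos (mul_pos (by positivity) (by positivity))
  apply Sfun_pos (n + 1) (by omega)
  constructor
  · exact mul_pos hden hx.1
  · have : ((n + 1 : ℕ) : ℝ) = (n : ℝ) + 1 := by push_cast; ring
    rw [this]
    nlinarith [hx.2]

lemma Gsmooth {n : ℕ} (hn : 1 ≤ n) :
    ContDiffOn ℝ ((n - 1 : ℕ) : ℕ∞) (Gfun n) (Set.Icc 0 1) := by
  have htp : ContDiff ℝ ((n - 1 : ℕ) : ℕ∞) (tp n) := by
    have := tp_contDiff (n - 1)
    rwa [show n - 1 + 1 = n from by omega] at this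
  have hS : ContDiff ℝ ((n - 1 : ℕ) : ℕ∞) (Sfun (n + 1)) := by
    unfold Sfun
    apply ContDiff.sum
    intro k _
    rw [Nat.add_sub_cancel]
    exact contDiff_const.mul (htp.comp (contDiff_id.sub contDiff_const))
  have hF : ContDiff ℝ ((n - 1 : ℕ) : ℕ∞)
      (fun x : ℝ => (n.factorial : ℝ)⁻¹ * (((n : ℝ) + 1)⁻¹) ^ n
        * Sfun (n + 1) (((n : ℝ) + 1) * x)) := by
    exact contDiff_const.mul (hS.comp (contDiff_const.mul contDiff_id))
  exact hF.contDiffOn.congr (fun x hx => Gfun_closed hn hx.1)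

/-- `G_n ∈ C^{n−1}([0,1])`, `G_n(x)/x^n → 1/n!` as `x → 0⁺`, `G_n(1−x) = G_n(x)` so that
`G_n(x) = O((1−x)^n)` as `x → 1⁻`, and `G_n > 0` on `(0,1)`. -/
theorem stmt17 (n : ℕ) (hn : 1 ≤ n) :
    ContDiffOn ℝ ((n - 1 : ℕ) : ℕ∞) (Gfun n) (Set.Icc 0 1) ∧
    Tendsto (fun x : ℝ => Gfun n x / x ^ n) (nhdsWithin 0 (Set.Ioi 0))
      (nhds ((n.factorial : ℝ)⁻¹)) ∧
    (∀ x ∈ Set.Icc (0 : ℝ) 1, Gfun n (1 - x) = Gfun n x) ∧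
    (Gfun n) =O[nhdsWithin 1 (Set.Iio 1)] (fun x : ℝ => (1 - x) ^ n) ∧
    (∀ x ∈ Set.Ioo (0 : ℝ) 1, 0 < Gfun n x) := by
  have hden : (0:ℝ) < (n : ℝ) + 1 := by positivity
  have hinv1 : 1 / ((n : ℝ) + 1) ≤ 1 := by
    rw [div_le_one hden]; linarith
  refine ⟨Gsmooth hn, ?_, Gsymm hn, ?_, Gpos hn⟩
  · have hev : ∀ᶠ x in nhdsWithin (0:ℝ) (Set.Ioi 0),
        (fun _ : ℝ => (n.factorial : ℝ)⁻¹) x = Gfun n x / x ^ n := by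
      filter_upwards [Ioo_mem_nhdsGT_of_mem
        (show (0:ℝ) ∈ Set.Ico (0:ℝ) (1 / ((n : ℝ) + 1)) from ⟨le_rfl, by positivity⟩)] with x hx
      rw [Gsmall hn hx.1.le hx.2.le, mul_comm, mul_div_assoc,
        div_self (pow_ne_zero n (ne_of_gt hx.1)), mul_one]
    exact tendsto_const_nhds.congr' hev
  · apply Asymptotics.IsBigO.of_bound (n.factorial : ℝ)⁻¹
    filter_upwards [Ioo_mem_nhdsLT_of_mem
      (show (1:ℝ) ∈ Set.Ioc (1 - 1 / ((n:ℝ)+1)) 1 from ⟨by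
        have : 0 < 1 / ((n:ℝ)+1) := by positivity
        linarith, le_rfl⟩)] with x hx
    have hx0 : 0 ≤ x := by linarith [hx.1, hinv1]
    have hx1 : x ≤ 1 := hx.2.le
    have h1x : 0 ≤ 1 - x := by linarith
    have h2x : 1 - x ≤ 1 / ((n:ℝ)+1) := by linarith [hx.1]
    have heq : Gfun n x = (1 - x) ^ n * (n.factorial : ℝ)⁻¹ := by
      rw [← Gsymm hn x ⟨hx0, hx1⟩, Gsmall hn h1x h2x]
    rw [heq, norm_mul]
    rw [show ‖(n.factorial : ℝ)⁻¹‖ = (n.factorial : ℝ)⁻¹ from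
      Real.norm_of_nonneg (by positivity)]
    exact le_of_eq (mul_comm _ _)
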